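/- arXiv:1705.05663 — 2 statements merged into one kernel-verified Lean document; each statement's English description precedes it below -/
import Mathlib

section
/- For 0 < V ≤ 1/√2, the white noise-BB84 box admits a LHV-LHS decomposition with a hidden variable of dimension 4: p(ab|xy) = Σ_{λ=0}^{3} (1/4)·P(a|x,λ)·P(b|y,ρ_λ), where P(a|x,λ) ranges over the four deterministic single-party boxes P_D^{00}, P_D^{01}, P_D^{10}, P_D^{11}, and each P(b|y,ρ_λ) is a single-party distribution assigning probabilities (1±V)/2 as specified: P(b|y,ρ₀) has rows ((1+V)/2,(1-V)/2),((1-V)/2,(1+V)/2); P(b|y,ρ₁) the transpose pattern ((1-V)/2,(1+V)/2),((1+V)/2,(1-V)/2); P(b|y,ρ₂) = ((1+V)/2,(1-V)/2) on both rows; P(b|y,ρ₃) = ((1-V)/2,(1+V)/2) on both rows. -/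
open Finset

/-- The white noise-BB84 box. -/
noncomputable def pBB84 (V : ℝ) (a b x y : Fin 2) : ℝ :=
  (1 + (-1 : ℝ) ^ ((a : ℕ) + (b : ℕ) + (x : ℕ) * (y : ℕ)) * (if x = y then V else 0)) / 4

/-- Single-party deterministic box P_D^{αβ}. -/
def PD (α β : Fin 2) (a x : Fin 2) : ℝ :=
  if a = α * x + β then 1 else 0

/-- Alice's deterministic responses in the dimension-4 LHV-LHS decomposition. -/
def PAlice : Fin 4 → Fin 2 → Fin 2 → ℝ := ![PD 0 0, PD 0 1, PD 1 0, PD 1 1]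

/-- Bob's local-hidden-state response distributions P(b|y,ρ_λ) of the dimension-4
LHV-LHS decomposition of the white noise-BB84 box. -/
noncomputable def PBob (V : ℝ) : Fin 4 → Fin 2 → Fin 2 → ℝ :=
  ![fun y b => if y = b then (1 + V) / 2 else (1 - V) / 2,
    fun y b => if y = b then (1 - V) / 2 else (1 + V) / 2,
    fun _ b => if b = 0 then (1 + V) / 2 else (1 - V) / 2,
    fun _ b => if b = 0 then (1 - V) / 2 else (1 + V) / 2]

/-- For 0 < V ≤ 1/√2 the white noise-BB84 box admits the dimension-4 LHV-LHS
decomposition with uniform weights 1/4. -/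
theorem bb84_dim4_LHV_LHS_decomposition (V : ℝ) (hV0 : 0 < V) (hV1 : V ≤ (Real.sqrt 2)⁻¹) :
    ∀ a b x y : Fin 2,
      pBB84 V a b x y = ∑ lam : Fin 4, (1 / 4 : ℝ) * PAlice lam a x * PBob V lam y b := by
  intro a b x y
  fin_cases a <;> fin_cases b <;> fin_cases x <;> fin_cases y <;>
    simp [pBB84, PAlice, PBob, PD, Fin.sum_univ_four] <;> ring
end

section
/- The white noise-BB84 box with 0 < V ≤ 1 admits no decomposition p(ab|xy) = (1/2)P_D^{00}(a|x)Q₀(b|y) + (1/2)P_D^{01}(a|x)Q₁(b|y) for any single-party distributions Q₀, Q₁: matching the (x,y)=(0,0) and (1,1) entries of the box forces Q₀, Q₁ uniquely, and the resulting box then fails to match the (x,y)=(0,1) entries. -/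
open Finset

/-- The white noise-BB84 box admits no decomposition
(1/2)P_D^{00}·Q₀ + (1/2)P_D^{01}·Q₁ with single-party distributions Q₀, Q₁. -/
theorem bb84_no_PD00_PD01_decomposition (V : ℝ) (hV0 : 0 < V) (hV1 : V ≤ 1) :
    ¬ ∃ (Q₀ Q₁ : Fin 2 → Fin 2 → ℝ),
        (∀ y b, 0 ≤ Q₀ y b) ∧ (∀ y, ∑ b : Fin 2, Q₀ y b = 1) ∧
        (∀ y b, 0 ≤ Q₁ y b) ∧ (∀ y, ∑ b : Fin 2, Q₁ y b = 1) ∧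
        (∀ a b x y : Fin 2,
          pBB84 V a b x y
            = (1 / 2 : ℝ) * PD 0 0 a x * Q₀ y b + (1 / 2 : ℝ) * PD 0 1 a x * Q₁ y b) := by
  rintro ⟨Q₀, Q₁, -, -, -, -, h⟩
  have h1 := h 0 0 0 1
  have h2 := h 0 0 1 1
  simp [pBB84, PD] at h1 h2
  linarith
end
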